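/- Let ε = exp(2πi/8), and in SL(2,ℂ) let S = (1/√2)·[[ε⁻¹, ε³],[ε, ε]] and U = [[0, 1],[−1, 0]]. Then the subgroup of SL(2,ℂ) generated by S and U (the binary tetrahedral group) has cardinality 24. -/

import Mathlib

open Complex Matrix Quaternion

instance : DecidableEq ℍ[ℤ] := fun x y =>
  decidable_of_iff (x.re = y.re ∧ x.imI = y.imI ∧ x.imJ = y.imJ ∧ x.imK = y.imK)
    ⟨fun ⟨h1, h2, h3, h4⟩ => QuaternionAlgebra.ext h1 h2 h3 h4,
     fun h => by subst h; exact ⟨rfl, rfl, rfl, rfl⟩⟩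

@[simp] lemma bt_mk_re (a b c d : ℤ) : (⟨a, b, c, d⟩ : ℍ[ℤ]).re = a := rfl
@[simp] lemma bt_mk_imI (a b c d : ℤ) : (⟨a, b, c, d⟩ : ℍ[ℤ]).imI = b := rfl
@[simp] lemma bt_mk_imJ (a b c d : ℤ) : (⟨a, b, c, d⟩ : ℍ[ℤ]).imJ = c := rfl
@[simp] lemma bt_mk_imK (a b c d : ℤ) : (⟨a, b, c, d⟩ : ℍ[ℤ]).imK = d := rfl

noncomputable def qmatZ (x : ℍ[ℤ]) : Matrix (Fin 2) (Fin 2) ℂ :=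
  !![(x.re : ℂ) + (x.imI : ℂ) * Complex.I, (x.imJ : ℂ) + (x.imK : ℂ) * Complex.I;
     -(x.imJ : ℂ) + (x.imK : ℂ) * Complex.I, (x.re : ℂ) - (x.imI : ℂ) * Complex.I]

lemma qmatZ_det (x : ℍ[ℤ]) :
    (qmatZ x).det = ((x.re ^ 2 + x.imI ^ 2 + x.imJ ^ 2 + x.imK ^ 2 : ℤ) : ℂ) := by
  rw [qmatZ, Matrix.det_fin_two_of]
  push_cast; ring_nf; rw [Complex.I_sq]; ring

lemma qmatZ_mul (x y : ℍ[ℤ]) : qmatZ (x * y) = qmatZ x * qmatZ y := by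
  ext i j
  fin_cases i <;> fin_cases j <;>
    · simp [qmatZ, Matrix.mul_apply, Fin.sum_univ_two, Quaternion.re_mul, Quaternion.imI_mul,
        Quaternion.imJ_mul, Quaternion.imK_mul]
      push_cast
      ring_nf
      rw [Complex.I_sq]
      ring

lemma int_complex_eq {a b c d : ℤ}
    (h : (a : ℂ) + (b : ℂ) * Complex.I = (c : ℂ) + (d : ℂ) * Complex.I) : a = c ∧ b = d := by
  have h1 := congrArg Complex.re h
  have h2 := congrArg Complex.im h
  simp at h1 h2
  exact ⟨by exact_mod_cast h1, by exact_mod_cast h2⟩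

lemma qmatZ_inj : Function.Injective qmatZ := by
  intro x y h
  have h00 : qmatZ x 0 0 = qmatZ y 0 0 := by rw [h]
  have h01 : qmatZ x 0 1 = qmatZ y 0 1 := by rw [h]
  simp only [qmatZ, Matrix.cons_val', Matrix.cons_val_zero, Matrix.cons_val_one,
    Matrix.head_cons, Matrix.empty_val', Matrix.cons_val_fin_one, Matrix.head_fin_const] at h00 h01
  obtain ⟨h1, h2⟩ := int_complex_eq h00
  obtain ⟨h3, h4⟩ := int_complex_eq h01
  exact QuaternionAlgebra.ext h1 h2 h3 h4

noncomputable def qmat2 (x : ℍ[ℤ]) : Matrix (Fin 2) (Fin 2) ℂ := (2 : ℂ)⁻¹ • qmatZ x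

def c2 : ℍ[ℤ] := ⟨2, 0, 0, 0⟩

lemma qmatZ_c2_mul (z : ℍ[ℤ]) : qmatZ (c2 * z) = (2 : ℂ) • qmatZ z := by
  rw [qmatZ_mul]
  have : qmatZ c2 = (2 : ℂ) • (1 : Matrix (Fin 2) (Fin 2) ℂ) := by
    ext i j
    fin_cases i <;> fin_cases j <;> simp [qmatZ, c2, Matrix.one_apply]
  rw [this, Matrix.smul_mul, one_mul]

lemma qmat2_mul {x y z : ℍ[ℤ]} (h : x * y = c2 * z) : qmat2 x * qmat2 y = qmat2 z := by
  unfold qmat2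
  rw [Matrix.smul_mul, Matrix.mul_smul, ← qmatZ_mul, h, qmatZ_c2_mul, smul_smul, smul_smul]
  congr 1
  norm_num

lemma qmat2_inj : Function.Injective qmat2 := by
  intro x y h
  apply qmatZ_inj
  have h' := congrArg (fun M => (2 : ℂ) • M) h
  simpa [qmat2, smul_smul] using h'

noncomputable def Φ (x : ℍ[ℤ]) (h : x.re ^ 2 + x.imI ^ 2 + x.imJ ^ 2 + x.imK ^ 2 = 4) :
    Matrix.SpecialLinearGroup (Fin 2) ℂ :=
  ⟨qmat2 x, by
    rw [qmat2, Matrix.det_smul, qmatZ_det,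
      show ((x.re ^ 2 + x.imI ^ 2 + x.imJ ^ 2 + x.imK ^ 2 : ℤ) : ℂ) = ((4 : ℤ) : ℂ) from by
        rw [h]]
    norm_num⟩

lemma Φ_congr {x y : ℍ[ℤ]} {hx hy} (h : x = y) : Φ x hx = Φ y hy := by subst h; rfl

lemma Φ_mul {x y z : ℍ[ℤ]} {hx hy hz} (h : x * y = c2 * z) : Φ x hx * Φ y hy = Φ z hz :=
  Subtype.ext (qmat2_mul h)

lemma closure_subset_finite {G : Type*} [Group G] (gen T : Set G) (hfin : T.Finite)
    (h1 : (1 : G) ∈ T) (hstab : ∀ g ∈ gen, ∀ t ∈ T, g * t ∈ T) :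
    (Subgroup.closure gen : Set G) ⊆ T := by
  have hM : ∀ x ∈ Subgroup.closure gen, ∀ t ∈ T, x * t ∈ T := by
    intro x hx
    induction hx using Subgroup.closure_induction with
    | mem g hg => exact hstab g hg
    | one => intro t ht; simpa using ht
    | mul a b ha hb pa pb =>
      intro t ht
      have := pa _ (pb t ht)
      simpa [mul_assoc] using this
    | inv a ha pa =>
      intro t ht
      have hmaps : Set.MapsTo (fun u => a * u) T T := fun u hu => pa u hu
      have hinjOn : Set.InjOn (fun u => a * u) T := fun u _ w _ huw =>
        mul_left_cancel huw
      have hbij : Set.BijOn (fun u => a * u) T T :=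
        (Set.Finite.injOn_iff_bijOn_of_mapsTo hfin hmaps).mp hinjOn
      obtain ⟨u, hu, huv⟩ := hbij.surjOn ht
      have : a⁻¹ * t = u := by rw [← huv]; simp
      rw [this]; exact hu
  intro x hx
  have := hM x hx 1 h1
  simpa using this

def w : Fin 24 → ℍ[ℤ] := ![
  ⟨2, 0, 0, 0⟩,
  ⟨1, -1, -1, 1⟩,
  ⟨0, 0, 2, 0⟩,
  ⟨-1, -1, -1, 1⟩,
  ⟨1, 1, 1, 1⟩,
  ⟨1, -1, 1, -1⟩,
  ⟨-2, 0, 0, 0⟩,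
  ⟨1, 1, -1, 1⟩,
  ⟨1, -1, 1, 1⟩,
  ⟨-1, 1, 1, -1⟩,
  ⟨1, -1, -1, -1⟩,
  ⟨-1, -1, 1, 1⟩,
  ⟨0, 0, -2, 0⟩,
  ⟨0, 0, 0, 2⟩,
  ⟨1, 1, 1, -1⟩,
  ⟨0, -2, 0, 0⟩,
  ⟨-1, 1, 1, 1⟩,
  ⟨-1, -1, -1, -1⟩,
  ⟨-1, -1, 1, -1⟩,
  ⟨-1, 1, -1, 1⟩,
  ⟨0, 2, 0, 0⟩,
  ⟨-1, 1, -1, -1⟩,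
  ⟨0, 0, 0, -2⟩,
  ⟨1, 1, -1, -1⟩]

lemma hw4 : ∀ n, (w n).re ^ 2 + (w n).imI ^ 2 + (w n).imJ ^ 2 + (w n).imK ^ 2 = 4 := by decide
lemma hw_inj : ∀ n m : Fin 24, w n = w m → n = m := by decide
lemma hexS : ∀ n : Fin 24, ∃ m : Fin 24, w 1 * w n = c2 * w m := by decide
lemma hexU : ∀ n : Fin 24, ∃ m : Fin 24, w 2 * w n = c2 * w m := by decide

/-- With `ε = exp(2πi/8)`, the subgroup of `SL(2,ℂ)` generated by
`S = (1/√2)[[ε⁻¹, ε³],[ε, ε]]` and `U = [[0,1],[−1,0]]` — the binary tetrahedral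
group — has 24 elements. -/
theorem card_binaryTetrahedral :
    letI ε : ℂ := Complex.exp (2 * Real.pi * Complex.I / 8)
    letI s : ℂ := (Real.sqrt 2 : ℝ)
    letI S : Matrix.SpecialLinearGroup (Fin 2) ℂ :=
      ⟨!![(1/s) * ε⁻¹, (1/s) * ε^3; (1/s) * ε, (1/s) * ε], by
        have hεdef : ε = Complex.exp (2 * Real.pi * Complex.I / 8) := rfl
        have hsdef : s = ((Real.sqrt 2 : ℝ) : ℂ) := rfl
        have hε : ε ≠ 0 := Complex.exp_ne_zero _
        have h4 : ε ^ 4 = -1 := by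
          rw [hεdef, ← Complex.exp_nat_mul]
          rw [show (4 : ℕ) * (2 * (Real.pi : ℂ) * Complex.I / 8) = Real.pi * Complex.I by
            push_cast; ring]
          exact Complex.exp_pi_mul_I
        have hs : s ^ 2 = 2 := by
          rw [hsdef]; norm_cast; exact Real.sq_sqrt (by norm_num)
        have hs0 : s ≠ 0 := by intro h; rw [h] at hs; norm_num at hs
        rw [Matrix.det_fin_two_of]
        field_simp
        linear_combination -h4 - hs⟩
    letI U : Matrix.SpecialLinearGroup (Fin 2) ℂ :=
      ⟨!![0, 1; -1, 0], by simp [Matrix.det_fin_two_of]⟩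
    Nat.card (Subgroup.closure {S, U} : Subgroup (Matrix.SpecialLinearGroup (Fin 2) ℂ)) = 24 := by
  set ε : ℂ := Complex.exp (2 * Real.pi * Complex.I / 8) with hεdef
  set s : ℂ := ((Real.sqrt 2 : ℝ) : ℂ) with hsdef
  -- basic facts about ε and s
  have hεval : ε = ((Real.sqrt 2 / 2 : ℝ) : ℂ) * (1 + Complex.I) := by
    rw [hεdef, show (2 * (Real.pi : ℂ) * Complex.I / 8) = ((Real.pi / 4 : ℝ) : ℂ) * Complex.I by
      push_cast; ring, Complex.exp_mul_I, ← Complex.ofReal_cos, ← Complex.ofReal_sin,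
      Real.cos_pi_div_four, Real.sin_pi_div_four]
    push_cast; ring
  have hs0 : s ≠ 0 := by
    rw [hsdef]
    exact Complex.ofReal_ne_zero.mpr (ne_of_gt (Real.sqrt_pos.mpr (by norm_num)))
  have h2c : ((Real.sqrt 2 : ℝ) : ℂ) * ((Real.sqrt 2 : ℝ) : ℂ) = 2 := by
    rw [← Complex.ofReal_mul, Real.mul_self_sqrt (by norm_num)]
    norm_num
  have e1 : (1/s) * ε = (1 + Complex.I)/2 := by
    rw [hεval, hsdef]
    field_simp
    push_cast; ring
  have hε2 : ε^2 = Complex.I := by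
    rw [hεval]
    push_cast
    linear_combination ((1 + Complex.I)^2/4) * h2c + (1/2) * Complex.I_sq
  have h4 : ε^4 = -1 := by
    rw [show ε^4 = (ε^2)^2 by ring, hε2, Complex.I_sq]
  have einv : ε⁻¹ = -ε^3 := inv_eq_of_mul_eq_one_right (by linear_combination -h4)
  have e2 : (1/s) * ε^3 = (-1 + Complex.I)/2 := by
    rw [show ε^3 = ε^2 * ε by ring, hε2,
      show (1/s) * (Complex.I * ε) = Complex.I * ((1/s) * ε) by ring, e1]
    linear_combination (1/2) * Complex.I_sq
  have e3 : (1/s) * ε⁻¹ = (1 - Complex.I)/2 := by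
    rw [einv, show (1/s) * (-ε^3) = -((1/s) * ε^3) by ring, e2]
    ring
  suffices key : ∀ A B : Matrix.SpecialLinearGroup (Fin 2) ℂ,
      A = Φ (w 1) (hw4 1) → B = Φ (w 2) (hw4 2) →
      Nat.card (Subgroup.closure {A, B} : Subgroup (Matrix.SpecialLinearGroup (Fin 2) ℂ)) = 24 by
    apply key
    · apply Subtype.ext
      show !![(1/s) * ε⁻¹, (1/s) * ε^3; (1/s) * ε, (1/s) * ε] = qmat2 (w 1)
      rw [e1, e2, e3]
      ext i j
      fin_cases i <;> fin_cases j <;> simp [qmat2, qmatZ, w] <;> push_cast <;> ring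
    · apply Subtype.ext
      show !![0, 1; -1, 0] = qmat2 (w 2)
      ext i j
      fin_cases i <;> fin_cases j <;> simp [qmat2, qmatZ, w] <;> push_cast <;> ring
  intro A B hA hB
  set cl := Subgroup.closure ({A, B} : Set (Matrix.SpecialLinearGroup (Fin 2) ℂ)) with hcl
  set f : Fin 24 → Matrix.SpecialLinearGroup (Fin 2) ℂ := fun n => Φ (w n) (hw4 n) with hf
  have hf_inj : Function.Injective f := by
    intro n m h
    exact hw_inj n m (qmat2_inj (congrArg Subtype.val h))
  have hfmul : ∀ g i k : Fin 24, w g * w i = c2 * w k → f g * f i = f k := by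
    intro g i k h
    exact Φ_mul h
  have hf0 : f 0 = 1 := by
    apply Subtype.ext
    show qmat2 (w 0) = 1
    ext i j
    fin_cases i <;> fin_cases j <;> simp [qmat2, qmatZ, w, Matrix.one_apply] <;> norm_num
  have m0 : f 0 ∈ cl := by rw [hf0]; exact one_mem cl
  have m1 : f 1 ∈ cl := by
    have : A ∈ cl := Subgroup.subset_closure (by simp)
    rwa [hA] at this
  have m2 : f 2 ∈ cl := by
    have : B ∈ cl := Subgroup.subset_closure (by simp)
    rwa [hB] at this
  have m3 : f 3 ∈ cl := by have := mul_mem m1 m1; rwa [hfmul 1 1 3 (by decide)] at this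
  have m4 : f 4 ∈ cl := by have := mul_mem m2 m1; rwa [hfmul 2 1 4 (by decide)] at this
  have m5 : f 5 ∈ cl := by have := mul_mem m1 m2; rwa [hfmul 1 2 5 (by decide)] at this
  have m6 : f 6 ∈ cl := by have := mul_mem m2 m2; rwa [hfmul 2 2 6 (by decide)] at this
  have m7 : f 7 ∈ cl := by have := mul_mem m2 m3; rwa [hfmul 2 3 7 (by decide)] at this
  have m8 : f 8 ∈ cl := by have := mul_mem m1 m4; rwa [hfmul 1 4 8 (by decide)] at this
  have m9 : f 9 ∈ cl := by have := mul_mem m2 m4; rwa [hfmul 2 4 9 (by decide)] at this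
  have m10 : f 10 ∈ cl := by have := mul_mem m1 m5; rwa [hfmul 1 5 10 (by decide)] at this
  have m11 : f 11 ∈ cl := by have := mul_mem m2 m5; rwa [hfmul 2 5 11 (by decide)] at this
  have m12 : f 12 ∈ cl := by have := mul_mem m2 m6; rwa [hfmul 2 6 12 (by decide)] at this
  have m13 : f 13 ∈ cl := by have := mul_mem m1 m7; rwa [hfmul 1 7 13 (by decide)] at this
  have m14 : f 14 ∈ cl := by have := mul_mem m2 m7; rwa [hfmul 2 7 14 (by decide)] at this
  have m15 : f 15 ∈ cl := by have := mul_mem m1 m8; rwa [hfmul 1 8 15 (by decide)] at this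
  have m16 : f 16 ∈ cl := by have := mul_mem m2 m8; rwa [hfmul 2 8 16 (by decide)] at this
  have m17 : f 17 ∈ cl := by have := mul_mem m2 m9; rwa [hfmul 2 9 17 (by decide)] at this
  have m18 : f 18 ∈ cl := by have := mul_mem m1 m11; rwa [hfmul 1 11 18 (by decide)] at this
  have m19 : f 19 ∈ cl := by have := mul_mem m2 m11; rwa [hfmul 2 11 19 (by decide)] at this
  have m20 : f 20 ∈ cl := by have := mul_mem m2 m13; rwa [hfmul 2 13 20 (by decide)] at this
  have m21 : f 21 ∈ cl := by have := mul_mem m2 m16; rwa [hfmul 2 16 21 (by decide)] at this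
  have m22 : f 22 ∈ cl := by have := mul_mem m1 m18; rwa [hfmul 1 18 22 (by decide)] at this
  have m23 : f 23 ∈ cl := by have := mul_mem m2 m19; rwa [hfmul 2 19 23 (by decide)] at this
  have hall : ∀ n, f n ∈ cl := by
    intro n
    fin_cases n
    exacts [m0, m1, m2, m3, m4, m5, m6, m7, m8, m9, m10, m11, m12, m13, m14, m15, m16, m17,
      m18, m19, m20, m21, m22, m23]
  have hsub : (cl : Set (Matrix.SpecialLinearGroup (Fin 2) ℂ)) ⊆ Set.range f := by
    apply closure_subset_finite _ _ (Set.finite_range f)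
    · exact ⟨0, hf0⟩
    · rintro g hg t ⟨n, rfl⟩
      rcases hg with rfl | rfl
      · obtain ⟨m, hm⟩ := hexS n
        exact ⟨m, by rw [hA]; exact (hfmul 1 n m hm).symm⟩
      · obtain ⟨m, hm⟩ := hexU n
        exact ⟨m, by rw [hB]; exact (hfmul 2 n m hm).symm⟩
  have hsup : Set.range f ⊆ (cl : Set (Matrix.SpecialLinearGroup (Fin 2) ℂ)) := by
    rintro t ⟨n, rfl⟩
    exact hall n
  have hset : (cl : Set (Matrix.SpecialLinearGroup (Fin 2) ℂ)) = Set.range f :=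
    Set.Subset.antisymm hsub hsup
  have hcard : Nat.card cl = Nat.card (Set.range f) := by
    rw [← SetLike.coe_sort_coe, hset]
  rw [hcard, Nat.card_range_of_injective hf_inj, Nat.card_eq_fintype_card, Fintype.card_fin]
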